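/- Let n ≥ 1 and let 0 ≤ t < k ≤ n be integers. Then there exists a point x ∈ ℝ^n such that no y ∈ ℝ^n with at most t distinct coordinates (i.e. with the set {y_1,…,y_n} of cardinality at most t) satisfies s_i(y) = s_i(x) for all i = 1,…,k. -/

import Mathlib

open Set Filter Module Topology ENNReal
noncomputable section
namespace StratumSharpAux

def F (n t k : ℕ) (σ : Fin n → Fin t) : (Fin t → ℝ) → (Fin k → ℝ) :=
  fun b i => ∑ j : Fin n, b (σ j) ^ ((i : ℕ) + 1)

lemma contDiff_F (n t k : ℕ) (σ : Fin n → Fin t) : ContDiff ℝ 1 (F n t k σ) := by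
  apply contDiff_pi.2
  intro i
  exact ContDiff.sum fun j _ => (contDiff_apply ℝ ℝ (σ j)).pow _

def G (k : ℕ) : (Fin k → ℝ) → (Fin k → ℝ) :=
  fun b i => ∑ j : Fin k, b j ^ ((i : ℕ) + 1)

lemma contDiff_G (k : ℕ) : ContDiff ℝ 1 (G k) := by
  apply contDiff_pi.2
  intro i
  exact ContDiff.sum fun j _ => (contDiff_apply ℝ ℝ j).pow _

def a (k : ℕ) : Fin k → ℝ := fun j => (j : ℝ)

def M (k : ℕ) : Matrix (Fin k) (Fin k) ℝ :=
  fun i j => (((i : ℕ) + 1 : ℕ) : ℝ) * a k j ^ (i : ℕ)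

lemma det_M_ne_zero (k : ℕ) : (M k).det ≠ 0 := by
  have hM : M k = Matrix.diagonal (fun i : Fin k => (((i : ℕ) + 1 : ℕ) : ℝ)) *
      (Matrix.vandermonde (a k)).transpose := by
    ext i j
    simp [M, Matrix.mul_apply, Matrix.diagonal, Matrix.vandermonde]
  rw [hM, Matrix.det_mul, Matrix.det_transpose, Matrix.det_diagonal]
  refine mul_ne_zero (Finset.prod_ne_zero_iff.2 fun i _ => by positivity) ?_
  rw [Matrix.det_vandermonde_ne_zero_iff]
  intro i j hij
  exact Fin.ext (Nat.cast_injective (R := ℝ) hij)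

def D (k : ℕ) : (Fin k → ℝ) →L[ℝ] (Fin k → ℝ) :=
  ContinuousLinearMap.pi fun i =>
    ∑ j : Fin k, M k i j • ContinuousLinearMap.proj j

lemma hasFDerivAt_G (k : ℕ) : HasFDerivAt (G k) (D k) (a k) := by
  apply hasFDerivAt_pi.2
  intro i
  apply HasFDerivAt.fun_sum
  intro j _
  have h1 : HasFDerivAt (fun b : Fin k → ℝ => b j)
      (ContinuousLinearMap.proj (R := ℝ) (φ := fun _ : Fin k => ℝ) j) (a k) :=
    hasFDerivAt_apply j (a k)
  have h2 := (hasDerivAt_pow ((i : ℕ) + 1) (a k j)).comp_hasFDerivAt (a k) h1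
  have : M k i j = ((((i : ℕ) + 1 : ℕ) : ℝ)) * a k j ^ (((i : ℕ) + 1) - 1) := by
    simp [M]
  rw [this]
  exact h2

def eM (k : ℕ) : (Fin k → ℝ) ≃L[ℝ] (Fin k → ℝ) :=
  LinearEquiv.toContinuousLinearEquiv
    ((M k).toLinearEquiv'
      (letI := invertibleOfNonzero (det_M_ne_zero k); (M k).invertibleOfDetInvertible))

lemma coe_eM (k : ℕ) : (eM k : (Fin k → ℝ) →L[ℝ] (Fin k → ℝ)) = D k := by
  apply ContinuousLinearMap.ext
  intro v
  show Matrix.toLin' (M k) v = D k v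
  funext i
  simp [Matrix.toLin'_apply, Matrix.mulVec, dotProduct, D,
    ContinuousLinearMap.sum_apply]

lemma range_G_mem_nhds (k : ℕ) : range (G k) ∈ 𝓝 (G k (a k)) := by
  have hstrict : HasStrictFDerivAt (G k) ((eM k : (Fin k → ℝ) →L[ℝ] (Fin k → ℝ))) (a k) := by
    have h := ((contDiff_G k).contDiffAt (x := a k)).hasStrictFDerivAt one_ne_zero
    rwa [(hasFDerivAt_G k).fderiv, ← coe_eM k] at h
  have hmap := hstrict.map_nhds_eq_of_equiv
  rw [← hmap]
  have : G k '' univ ∈ map (G k) (𝓝 (a k)) := Filter.image_mem_map univ_mem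
  rwa [image_univ] at this

end StratumSharpAux

open StratumSharpAux in
/-- Proposition 2.8 for `G = Sₙ`, `J = {1,…,k}`: for `t < k ≤ n` there is a point
`x ∈ ℝⁿ` whose first `k` power sums are not matched by any point with at most `t`
distinct coordinates; thus the dimension bound in Conjecture 1.3 is best possible. -/
theorem stratum_dimension_sharp_Sn
    (n : ℕ) (hn : 1 ≤ n) (t k : ℕ) (htk : t < k) (hkn : k ≤ n) :
    ∃ x : Fin n → ℝ, ∀ y : Fin n → ℝ, (Set.range y).ncard ≤ t →
      ¬(∀ i, 1 ≤ i → i ≤ k → ∑ j, y j ^ i = ∑ j, x j ^ i) := by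
  classical
  set S : Set (Fin k → ℝ) := ⋃ σ : Fin n → Fin t, range (F n t k σ) with hS
  -- dimension bound on S
  have hdimS : dimH S ≤ (t : ℝ≥0∞) := by
    rw [hS, dimH_iUnion]
    refine iSup_le fun σ => ?_
    have := (contDiff_F n t k σ).dimH_range_le
    rwa [Module.finrank_fin_fun] at this
  -- a point of range (G k) outside S
  have hex : ∃ p ∈ range (G k), p ∉ S := by
    by_contra hcon
    push_neg at hcon
    have hsub : range (G k) ⊆ S := hcon
    have hmem : S ∈ 𝓝 (G k (a k)) := mem_of_superset (range_G_mem_nhds k) hsub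
    have hdim := Real.dimH_of_mem_nhds hmem
    rw [Module.finrank_fin_fun] at hdim
    have : (k : ℝ≥0∞) ≤ (t : ℝ≥0∞) := hdim ▸ hdimS
    exact absurd (Nat.cast_le.1 this) (not_le.2 htk)
  obtain ⟨p, ⟨b₀, hb₀⟩, hpS⟩ := hex
  -- the witness x : pad b₀ with zeros
  refine ⟨fun j => if h : (j : ℕ) < k then b₀ ⟨j, h⟩ else 0, ?_⟩
  set x : Fin n → ℝ := fun j => if h : (j : ℕ) < k then b₀ ⟨j, h⟩ else 0 with hx
  have hxsum : ∀ i : Fin k, ∑ j, x j ^ ((i : ℕ) + 1) = p i := by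
    intro i
    rw [← hb₀]
    show ∑ j : Fin n, x j ^ ((i : ℕ) + 1) = ∑ j : Fin k, b₀ j ^ ((i : ℕ) + 1)
    calc ∑ j : Fin n, x j ^ ((i : ℕ) + 1)
        = ∑ j ∈ Finset.univ.map (Fin.castLEEmb hkn), x j ^ ((i : ℕ) + 1) := by
          refine (Finset.sum_subset (Finset.subset_univ _) ?_).symm
          intro j _ hj
          have hjk : ¬ (j : ℕ) < k := by
            intro hlt
            exact hj (Finset.mem_map.2 ⟨⟨j, hlt⟩, Finset.mem_univ _, by
              simp [Fin.castLEEmb, Fin.castLE]⟩)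
          simp [hx, hjk]
      _ = ∑ j : Fin k, x (Fin.castLEEmb hkn j) ^ ((i : ℕ) + 1) := Finset.sum_map _ _ _
      _ = ∑ j : Fin k, b₀ j ^ ((i : ℕ) + 1) := by
          refine Finset.sum_congr rfl fun j _ => ?_
          have hjlt : ((Fin.castLEEmb hkn j : Fin n) : ℕ) < k := by
            simp
          simp only [hx, dif_pos hjlt]
          congr 1
  intro y hy hmatch
  -- y has at most t distinct values: factor it
  have hfin : (range y).Finite := Set.finite_range y
  haveI := hfin.fintype
  have hne : Nonempty (range y) := ⟨⟨y ⟨0, hn⟩, mem_range_self _⟩⟩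
  have hcard : Fintype.card (range y) ≤ Fintype.card (Fin t) := by
    rw [Fintype.card_fin]
    calc Fintype.card (range y) = (range y).ncard := by
          rw [← Nat.card_coe_set_eq, Nat.card_eq_fintype_card]
      _ ≤ t := hy
  obtain ⟨e⟩ := Function.Embedding.nonempty_of_card_le hcard
  set σ : Fin n → Fin t := fun j => e ⟨y j, mem_range_self j⟩ with hσ
  set b : Fin t → ℝ := fun i => ((Function.invFun e i : range y) : ℝ) with hb
  have hbσ : ∀ j, b (σ j) = y j := by
    intro j
    have h := Function.leftInverse_invFun e.injective ⟨y j, mem_range_self j⟩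
    simp only [hb, hσ, h]
  -- p ∈ S, contradiction
  apply hpS
  rw [hS]
  refine mem_iUnion.2 ⟨σ, ⟨b, ?_⟩⟩
  funext i
  show ∑ j : Fin n, b (σ j) ^ ((i : ℕ) + 1) = p i
  rw [← hxsum i]
  calc ∑ j : Fin n, b (σ j) ^ ((i : ℕ) + 1) = ∑ j : Fin n, y j ^ ((i : ℕ) + 1) := by
        refine Finset.sum_congr rfl fun j _ => by rw [hbσ]
    _ = ∑ j, x j ^ ((i : ℕ) + 1) := hmatch ((i : ℕ) + 1) (Nat.succ_le_succ (Nat.zero_le _)) i.isLt
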